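/- For any parameters f ∈ (0,1) and κ, γ₁, γ₂, γ₃ > 0, the ZIP regulatory system has at least one steady state in the open cube (0,1)⁴: there exists u* with 0 < uᵢ* < 1 for i = 1,2,3,4 and F(u*) = 0. -/
import Mathlib


/-- The ZIP regulatory vector field on ℝ⁴ (components indexed by `Fin 4`). -/
noncomputable def zipField (κ γ₁ γ₂ γ₃ f : ℝ) (u : Fin 4 → ℝ) : Fin 4 → ℝ :=
  ![κ * (u 2) ^ 2 * (1 - u 0) - u 0,
    u 0 * f - u 1,
    1 - γ₁ * u 2 * u 3 - u 2,
    γ₂ * u 1 - γ₃ * u 2 * u 3 - (1 + γ₂ * u 1) * u 3]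

/-- the ZIP regulatory system has at least one steady state in
the open cube (0,1)⁴. -/
theorem zip_steady_state_exists_interior
    (κ γ₁ γ₂ γ₃ f : ℝ) (hκ : 0 < κ) (hγ₁ : 0 < γ₁) (hγ₂ : 0 < γ₂) (hγ₃ : 0 < γ₃)
    (hf : f ∈ Set.Ioo (0 : ℝ) 1) :
    ∃ u : Fin 4 → ℝ, (∀ i, u i ∈ Set.Ioo (0 : ℝ) 1) ∧ zipField κ γ₁ γ₂ γ₃ f u = 0 := by
  obtain ⟨hf0, hf1⟩ := hf
  -- auxiliary one-variable functions
  set A : ℝ → ℝ := fun x => 1 / (1 + γ₁ * x) with hAdef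
  set B : ℝ → ℝ := fun x => κ * (A x) ^ 2 / (1 + κ * (A x) ^ 2) with hBdef
  set C : ℝ → ℝ := fun x => f * B x with hCdef
  set G : ℝ → ℝ := fun x => γ₂ * C x / (1 + γ₂ * C x + γ₃ * A x) with hGdef
  -- positivity facts for x ≥ 0
  have hAden : ∀ x : ℝ, 0 ≤ x → 0 < 1 + γ₁ * x := fun x hx => by positivity
  have hApos : ∀ x : ℝ, 0 ≤ x → 0 < A x := fun x hx => by
    simp only [hAdef]; exact div_pos one_pos (hAden x hx)
  have hBden : ∀ x : ℝ, 0 < 1 + κ * (A x) ^ 2 := fun x => by positivity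
  have hBpos : ∀ x : ℝ, 0 ≤ x → 0 < B x := fun x hx => by
    simp only [hBdef]
    exact div_pos (by have := hApos x hx; positivity) (hBden x)
  have hBlt : ∀ x : ℝ, B x < 1 := fun x => by
    simp only [hBdef]
    rw [div_lt_one (hBden x)]; linarith
  have hCpos : ∀ x : ℝ, 0 ≤ x → 0 < C x := fun x hx => by
    simp only [hCdef]; exact mul_pos hf0 (hBpos x hx)
  have hGden : ∀ x : ℝ, 0 ≤ x → 0 < 1 + γ₂ * C x + γ₃ * A x := fun x hx => by
    have h1 := hCpos x hx; have h2 := hApos x hx; positivity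
  have hGpos : ∀ x : ℝ, 0 ≤ x → 0 < G x := fun x hx => by
    simp only [hGdef]
    exact div_pos (mul_pos hγ₂ (hCpos x hx)) (hGden x hx)
  have hGlt : ∀ x : ℝ, 0 ≤ x → G x < 1 := fun x hx => by
    simp only [hGdef]
    rw [div_lt_one (hGden x hx)]
    have := hApos x hx
    nlinarith
  -- continuity of G - id on [0,1]
  have hAc : ContinuousOn A (Set.Icc 0 1) := by
    apply ContinuousOn.div continuousOn_const
    · fun_prop
    · intro x hx; exact ne_of_gt (hAden x hx.1)
  have hBc : ContinuousOn B (Set.Icc 0 1) := by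
    apply ContinuousOn.div
    · exact (continuousOn_const.mul (hAc.pow 2))
    · exact (continuousOn_const.add (continuousOn_const.mul (hAc.pow 2)))
    · intro x hx; exact ne_of_gt (hBden x)
  have hCc : ContinuousOn C (Set.Icc 0 1) := continuousOn_const.mul hBc
  have hGc : ContinuousOn G (Set.Icc 0 1) := by
    apply ContinuousOn.div
    · exact continuousOn_const.mul hCc
    · exact (continuousOn_const.add (continuousOn_const.mul hCc)).add
        (continuousOn_const.mul hAc)
    · intro x hx; exact ne_of_gt (hGden x hx.1)
  have hHc : ContinuousOn (fun x => G x - x) (Set.Icc 0 1) :=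
    hGc.sub continuousOn_id
  -- IVT: G x = x for some x ∈ (0,1)
  have h0 : (0 : ℝ) < G 0 - 0 := by simpa using hGpos 0 le_rfl
  have h1 : G 1 - 1 < 0 := by have := hGlt 1 zero_le_one; linarith
  have hmem : (0 : ℝ) ∈ Set.Ioo (G 1 - 1) (G 0 - 0) := ⟨h1, h0⟩
  have := intermediate_value_Ioo' (zero_le_one) hHc hmem
  obtain ⟨x, hxIoo, hxeq⟩ := this
  have hx0 : 0 < x := hxIoo.1
  have hx1 : x < 1 := hxIoo.2
  have hxnn : (0:ℝ) ≤ x := le_of_lt hx0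
  have hGx : G x = x := by linarith [sub_eq_zero.mp hxeq]
  -- assemble the steady state
  refine ⟨![B x, C x, A x, x], ?_, ?_⟩
  · intro i
    fin_cases i
    · exact ⟨hBpos x hxnn, hBlt x⟩
    · refine ⟨hCpos x hxnn, ?_⟩
      simp only [hCdef]
      calc f * B x < 1 * 1 := by
            apply mul_lt_mul' (le_of_lt hf1) (hBlt x) (le_of_lt (hBpos x hxnn)) one_pos
        _ = 1 := by ring
    · refine ⟨hApos x hxnn, ?_⟩
      show A x < 1
      have hAx' : A x = 1 / (1 + γ₁ * x) := rfl
      rw [hAx', div_lt_one (hAden x hxnn)]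
      nlinarith
    · exact ⟨hx0, hx1⟩
  · have hAx : A x * (1 + γ₁ * x) = 1 := by
      simp only [hAdef]; field_simp
    have hBx : B x * (1 + κ * (A x) ^ 2) = κ * (A x) ^ 2 := by
      simp only [hBdef]; field_simp
    have hGxx : x * (1 + γ₂ * C x + γ₃ * A x) = γ₂ * C x := by
      have h := hGx
      simp only [hGdef] at h
      rw [div_eq_iff (ne_of_gt (hGden x hxnn))] at h
      linarith
    funext i
    fin_cases i
    · show κ * (A x) ^ 2 * (1 - B x) - B x = 0
      nlinarith [hBx]
    · show B x * f - C x = 0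
      simp only [hCdef]; ring
    · show 1 - γ₁ * A x * x - A x = 0
      nlinarith [hAx]
    · show γ₂ * C x - γ₃ * A x * x - (1 + γ₂ * C x) * x = 0
      nlinarith [hGxx]
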